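/- arXiv:2303.07444 — 2 statements merged into one kernel-verified Lean document; each statement's English description precedes it below -/
import Mathlib

section
/- Let ℓ ≥ 1 be an integer, let c ≥ 1 be a real number, and let 𝒟 be a finite family of closed disks in ℝ² of common radius c whose union is contained in an axis-aligned rectangle of width at most ℓ − 1. Then the intersection graph G of 𝒟 has a tree decomposition 𝒯 with independence number α(𝒯) ≤ 2·⌈ℓ/c⌉; in particular, tree-α(G) ≤ 2·⌈ℓ/c⌉. -/
open Classical

/-- A tree decomposition of a graph `G`. -/
structure TreeDecomp {V : Type*} (G : SimpleGraph V) where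
  ι : Type
  fin : Fintype ι
  T : SimpleGraph ι
  isTree : T.IsTree
  bag : ι → Set V
  mem_bag : ∀ v : V, ∃ t, v ∈ bag t
  edge_bag : ∀ ⦃u v : V⦄, G.Adj u v → ∃ t, u ∈ bag t ∧ v ∈ bag t
  bag_connected : ∀ v : V, (T.induce {t | v ∈ bag t}).Connected

/-- `I` is an independent set of `G` contained in `S`, i.e. an independent set of `G[S]`. -/
def IsIndepSetIn {V : Type*} (G : SimpleGraph V) (S : Set V) (I : Finset V) : Prop :=
  ↑I ⊆ S ∧ ∀ u ∈ I, ∀ v ∈ I, u ≠ v → ¬ G.Adj u v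

/-- `α(G[S]) ≤ k`. -/
def IndepLE {V : Type*} (G : SimpleGraph V) (S : Set V) (k : ℕ) : Prop :=
  ∀ I : Finset V, IsIndepSetIn G S I → I.card ≤ k

/-- The independence number of the tree decomposition is at most `k`. -/
def TreeDecomp.IndepNumLE {V : Type*} {G : SimpleGraph V} (td : TreeDecomp G) (k : ℕ) : Prop :=
  ∀ t : td.ι, IndepLE G (td.bag t) k

/-- The tree-independence number of `G` is at most `k`. -/
def treeAlphaLE {V : Type*} (G : SimpleGraph V) (k : ℕ) : Prop :=
  ∃ td : TreeDecomp G, td.IndepNumLE k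

/-- The tree-independence number of `G`. -/
noncomputable def treeAlpha {V : Type*} (G : SimpleGraph V) : ℕ :=
  sInf {k | treeAlphaLE G k}

/-- A layering of `G`, encoded by the function sending a vertex to the index of its layer. -/
def IsLayering {V : Type*} (G : SimpleGraph V) (L : V → ℕ) : Prop :=
  ∀ ⦃u v : V⦄, G.Adj u v → (L u : ℤ) ≤ (L v : ℤ) + 1

/-- The layered tree-independence number of `G` is at most `k`. -/
def layeredTreeAlphaLE {V : Type*} (G : SimpleGraph V) (k : ℕ) : Prop :=
  ∃ (td : TreeDecomp G) (L : V → ℕ), IsLayering G L ∧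
    ∀ (t : td.ι) (i : ℕ), IndepLE G (td.bag t ∩ {v | L v = i}) k

/-- The layered tree-independence number of `G`. -/
noncomputable def layeredTreeAlpha {V : Type*} (G : SimpleGraph V) : ℕ :=
  sInf {k | layeredTreeAlphaLE G k}

/-- The number of elements of the multiset `𝒞` containing `v` (with multiplicity). -/
noncomputable def coverCount {V : Type*} (𝒞 : Multiset (Set V)) (v : V) : ℕ :=
  Multiset.countP (fun C => v ∈ C) 𝒞

/-- `𝒞` is a `β`-general cover: every vertex belongs to at least `β·|𝒞|` elements. -/
def IsGeneralCover {V : Type*} (β : ℝ) (𝒞 : Multiset (Set V)) : Prop :=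
  𝒞 ≠ 0 ∧ ∀ v : V, β * (Multiset.card 𝒞 : ℝ) ≤ (coverCount 𝒞 v : ℝ)

/-- The intersection graph of an (indexed) family of sets. -/
def intersectionGraph {ι : Type*} {α : Type*} (D : ι → Set α) : SimpleGraph ι where
  Adj i j := i ≠ j ∧ (D i ∩ D j).Nonempty
  symm := by
    constructor
    rintro i j ⟨hne, x, hx1, hx2⟩
    exact ⟨hne.symm, x, hx2, hx1⟩
  loopless := by
    constructor
    rintro i ⟨hne, -⟩
    exact hne rfl

/-- The `p`-th power of a graph. -/
def gpower {V : Type*} (G : SimpleGraph V) (p : ℕ) : SimpleGraph V where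
  Adj u v := u ≠ v ∧ ∃ w : G.Walk u v, w.length ≤ p
  symm := by
    constructor
    rintro u v ⟨hne, w, hw⟩
    exact ⟨hne.symm, w.reverse, by simpa using hw⟩
  loopless := by
    constructor
    rintro u ⟨hne, -⟩
    exact hne rfl

/-- The axis-aligned closed hypercube of side length `r` with lower corner `x`. -/
def cube (d : ℕ) (x : EuclideanSpace ℝ (Fin d)) (r : ℝ) : Set (EuclideanSpace ℝ (Fin d)) :=
  {y | ∀ i, x i ≤ y i ∧ y i ≤ x i + r}

/-- The size of an object: the side length of its smallest enclosing axis-aligned hypercube. -/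
noncomputable def objSize (d : ℕ) (O : Set (EuclideanSpace ℝ (Fin d))) : ℝ :=
  sInf {r : ℝ | 0 ≤ r ∧ ∃ x, O ⊆ cube d x r}

/-- The collection `O` is `c`-fat. -/
def IsFat {ι : Type*} (d : ℕ) (c : ℝ) (O : ι → Set (EuclideanSpace ℝ (Fin d))) : Prop :=
  ∀ r : ℝ, 0 < r → ∀ x : EuclideanSpace ℝ (Fin d), ∀ P : Finset ι,
    (∀ i ∈ P, ∀ j ∈ P, i ≠ j → Disjoint (O i) (O j)) →
    (∀ i ∈ P, (O i ∩ cube d x r).Nonempty ∧ r ≤ objSize d (O i)) →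
    ∃ pts : Finset (EuclideanSpace ℝ (Fin d)),
      (pts.card : ℝ) ≤ c ∧ ∀ i ∈ P, ∃ p ∈ pts, p ∈ O i

/-- The `n`-dimensional grid graph of width `n`. -/
def gridGraphN (n : ℕ) : SimpleGraph (Fin n → Fin n) where
  Adj a b := ∑ i, ((a i : ℤ) - (b i : ℤ)).natAbs = 1
  symm := by
    constructor
    intro a b h
    rw [← h]
    exact Finset.sum_congr rfl fun i _ => by omega
  loopless := by
    constructor
    intro a h
    simp at h

/-- The grid graph on `ℤ²`. -/
def latticeGraph : SimpleGraph (ℤ × ℤ) where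
  Adj p q := (p.1 - q.1).natAbs + (p.2 - q.2).natAbs = 1
  symm := by
    constructor
    intro p q h
    omega
  loopless := by
    constructor
    intro p h
    simp at h

/-- `P` is (the vertex set of) a path on the integer grid: a finite nonempty subset of `ℤ²`
whose induced subgraph in the grid graph is a path. -/
def IsGridPath (P : Set (ℤ × ℤ)) : Prop :=
  P.Finite ∧ P.Nonempty ∧ (latticeGraph.induce P).IsTree ∧
    ∀ v : P, ((latticeGraph.induce P).neighborSet v).ncard ≤ 2


open SimpleGraph in
lemma sdiff_walk_invariant {n : ℕ} (v w : Fin (n+1)) (hvw : (w : ℕ) = (v : ℕ) + 1)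
    {a b : Fin (n+1)}
    (p : (pathGraph (n+1) \ fromEdgeSet {s(v, w)}).Walk a b) :
    ((a : ℕ) ≤ v ↔ (b : ℕ) ≤ v) := by
  induction p with
  | nil => rfl
  | @cons u u' _ h p ih =>
    refine Iff.trans ?_ ih
    rw [SimpleGraph.sdiff_adj] at h
    obtain ⟨h1, h2⟩ := h
    have hne : u ≠ u' := SimpleGraph.Adj.ne h1
    rw [pathGraph_adj] at h1
    rw [SimpleGraph.fromEdgeSet_adj] at h2
    push_neg at h2
    have hs : s(u, u') ≠ s(v, w) := fun hh => hne (h2 (by simp [hh]))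
    have hn : ¬((u = v ∧ u' = w) ∨ (u = w ∧ u' = v)) := by
      simpa [Sym2.eq_iff] using hs
    simp only [Fin.ext_iff] at hn
    omega

open SimpleGraph in
lemma pathGraph_isTree (n : ℕ) : (pathGraph (n+1)).IsTree := by
  constructor
  · exact pathGraph_connected n
  · rw [isAcyclic_iff_forall_adj_isBridge]
    intro v w hadj
    rw [pathGraph_adj] at hadj
    have key : ∀ v w : Fin (n+1), (w : ℕ) = (v : ℕ) + 1 →
        (pathGraph (n+1)).IsBridge s(v, w) := by
      intro v w hvw
      rw [SimpleGraph.isBridge_iff]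
      rintro ⟨p⟩
      have := sdiff_walk_invariant v w hvw p
      omega
    rcases hadj with h | h
    · exact key v w h.symm
    · rw [Sym2.eq_swap]
      exact key w v h.symm

open SimpleGraph in
lemma induce_pathGraph_connected {N : ℕ} (S : Set (Fin N))
    (hconv : ∀ a b c : Fin N, a ≤ b → b ≤ c → a ∈ S → c ∈ S → b ∈ S)
    (hne : S.Nonempty) : ((pathGraph N).induce S).Connected := by
  have hne' : Nonempty S := hne.to_subtype
  refine ⟨?_⟩
  have aux : ∀ d : ℕ, ∀ u v : S, ((v : Fin N) : ℕ) = ((u : Fin N) : ℕ) + d →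
      ((pathGraph N).induce S).Reachable u v := by
    intro d
    induction d with
    | zero =>
      intro u v h
      have : u = v := by ext; omega
      exact this ▸ Reachable.rfl
    | succ d ih =>
      intro u v h
      have hlt : ((u : Fin N) : ℕ) + 1 < N := by
        have := ((v : Fin N)).isLt
        omega
      set u1 : Fin N := ⟨((u : Fin N) : ℕ) + 1, hlt⟩ with hu1
      have hu1S : u1 ∈ S := by
        refine hconv (u : Fin N) u1 (v : Fin N) ?_ ?_ u.2 v.2
        · rw [Fin.le_def]; simp [hu1]
        · rw [Fin.le_def]; show ((u : Fin N) : ℕ) + 1 ≤ ((v : Fin N) : ℕ); omega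
      have hadj : ((pathGraph N).induce S).Adj u ⟨u1, hu1S⟩ := by
        simp only [SimpleGraph.comap_adj, Function.Embedding.coe_subtype, pathGraph_adj]
        left; simp [hu1]
      exact hadj.reachable.trans (ih ⟨u1, hu1S⟩ v (by simp [hu1]; omega))
  intro u v
  rcases le_total ((u : Fin N) : ℕ) ((v : Fin N) : ℕ) with h | h
  · exact aux (((v : Fin N) : ℕ) - ((u : Fin N) : ℕ)) u v (by omega)
  · exact (aux (((u : Fin N) : ℕ) - ((v : Fin N) : ℕ)) v u (by omega)).symm

set_option maxHeartbeats 2000000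

/-- the intersection graph of a finite family of closed disks of common radius
`c ≥ 1` contained in an axis-aligned rectangle of width at most `ℓ - 1` has a tree
decomposition of independence number at most `2·⌈ℓ/c⌉`. -/
theorem stmt17 {ι : Type} [Fintype ι] (l : ℕ) (hl : 1 ≤ l) (c : ℝ) (hc : 1 ≤ c)
    (ctr : ι → EuclideanSpace ℝ (Fin 2)) (x₀ : ℝ)
    (hwidth : ∀ i, ∀ p ∈ Metric.closedBall (ctr i) c,
      x₀ ≤ p 0 ∧ p 0 ≤ x₀ + ((l : ℝ) - 1)) :
    ∃ td : TreeDecomp (intersectionGraph fun i => Metric.closedBall (ctr i) c),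
      td.IndepNumLE (2 * ⌈(l : ℝ) / c⌉).toNat ∧
      treeAlpha (intersectionGraph fun i => Metric.closedBall (ctr i) c) ≤
        (2 * ⌈(l : ℝ) / c⌉).toNat := by
  classical
  have hc0 : (0:ℝ) < c := lt_of_lt_of_le one_pos hc
  have hl0 : (0:ℝ) < (l:ℝ) := by exact_mod_cast hl
  have hm1 : (1:ℤ) ≤ ⌈(l:ℝ)/c⌉ := Int.ceil_pos.mpr (div_pos hl0 hc0)
  suffices h : ∃ td : TreeDecomp (intersectionGraph fun i => Metric.closedBall (ctr i) c),
      td.IndepNumLE (2 * ⌈(l : ℝ) / c⌉).toNat by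
    obtain ⟨td, htd⟩ := h
    exact ⟨td, htd, Nat.sInf_le ⟨td, htd⟩⟩
  by_cases hne : Nonempty ι
  · -- main case
    obtain ⟨i0⟩ := hne
    set m : ι → ℤ := fun i => ⌊ctr i 1 / c⌋ with hm
    have hU : (Finset.univ : Finset ι).Nonempty := ⟨i0, Finset.mem_univ _⟩
    set A : ℤ := Finset.univ.inf' hU m - 3 with hA
    set B : ℤ := Finset.univ.sup' hU m with hB
    have hAB : ∀ i : ι, A + 3 ≤ m i ∧ m i ≤ B := fun i =>
      ⟨by have := Finset.inf'_le m (Finset.mem_univ i); omega,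
       Finset.le_sup' m (Finset.mem_univ i)⟩
    set N : ℕ := (B - A).toNat + 1 with hN
    have hNt : ∀ i : ι, (m i - A).toNat < N := by
      intro i; have h1 := (hAB i).1; have h2 := (hAB i).2; omega
    have hmi : ∀ i, m i = ⌊ctr i 1 / c⌋ := fun i => by rw [hm]
    have hfl1 : ∀ i, (m i : ℝ) * c ≤ ctr i 1 := by
      intro i
      rw [hmi i]
      exact (le_div_iff₀ hc0).mp (Int.floor_le _)
    have hfl2 : ∀ i, ctr i 1 < (m i : ℝ) * c + c := by
      intro i
      rw [hmi i]
      have h := (div_lt_iff₀ hc0).mp (Int.lt_floor_add_one (ctr i 1 / c))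
      push_cast at h ⊢
      nlinarith [h]
    -- geometry facts
    have hcoord : ∀ i j : ι, dist (ctr i) (ctr j) ^ 2
        = (ctr i 0 - ctr j 0)^2 + (ctr i 1 - ctr j 1)^2 := by
      intro i j
      rw [EuclideanSpace.dist_eq, Real.sq_sqrt (by positivity), Fin.sum_univ_two,
        Real.dist_eq, Real.dist_eq, sq_abs, sq_abs]
    have hydiff : ∀ i j : ι, |ctr i 1 - ctr j 1| ≤ dist (ctr i) (ctr j) := by
      intro i j
      have h2 : (ctr i 1 - ctr j 1)^2 ≤ dist (ctr i) (ctr j)^2 := by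
        nlinarith [hcoord i j, sq_nonneg (ctr i 0 - ctr j 0)]
      calc |ctr i 1 - ctr j 1| = √((ctr i 1 - ctr j 1)^2) := (Real.sqrt_sq_eq_abs _).symm
        _ ≤ √(dist (ctr i) (ctr j)^2) := Real.sqrt_le_sqrt h2
        _ = dist (ctr i) (ctr j) := Real.sqrt_sq dist_nonneg
    have hfar : ∀ i j : ι, i ≠ j →
        ¬ (intersectionGraph fun i => Metric.closedBall (ctr i) c).Adj i j →
        2 * c < dist (ctr i) (ctr j) := by
      intro i j hij hnadj
      by_contra hle
      push_neg at hle
      apply hnadj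
      refine ⟨hij, midpoint ℝ (ctr i) (ctr j), ?_, ?_⟩
      · rw [Metric.mem_closedBall, dist_comm, dist_left_midpoint (𝕜 := ℝ)]
        rw [Real.norm_two]
        linarith [dist_nonneg (x := ctr i) (y := ctr j)]
      · rw [Metric.mem_closedBall, dist_comm, dist_right_midpoint (𝕜 := ℝ)]
        rw [Real.norm_two]
        linarith [dist_nonneg (x := ctr i) (y := ctr j)]
    have hxb : ∀ i : ι, x₀ + c ≤ ctr i 0 ∧ ctr i 0 ≤ x₀ + ((l:ℝ) - 1) - c := by
      intro i
      have hmem1 : ctr i + EuclideanSpace.single (0 : Fin 2) c ∈ Metric.closedBall (ctr i) c := by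
        rw [Metric.mem_closedBall, dist_self_add_left, EuclideanSpace.norm_single]
        rw [Real.norm_eq_abs, abs_of_pos hc0]
      have hmem2 : ctr i + EuclideanSpace.single (0 : Fin 2) (-c) ∈ Metric.closedBall (ctr i) c := by
        rw [Metric.mem_closedBall, dist_self_add_left, EuclideanSpace.norm_single]
        rw [Real.norm_eq_abs, abs_neg, abs_of_pos hc0]
      have h1 := (hwidth i _ hmem1).2
      have h2 := (hwidth i _ hmem2).1
      have e1 : (ctr i + EuclideanSpace.single (0 : Fin 2) c) 0 = ctr i 0 + c := by
        simp [EuclideanSpace.single_apply]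
      have e2 : (ctr i + EuclideanSpace.single (0 : Fin 2) (-c)) 0 = ctr i 0 - c := by
        simp [EuclideanSpace.single_apply]
        ring
      rw [e1] at h1; rw [e2] at h2
      constructor <;> linarith
    -- bag membership helpers
    have hbag : ∀ (i : ι) (t : Fin N), ((t : ℕ) : ℤ) = m i - A →
        (((A + ((t : ℕ) : ℤ) : ℤ) : ℝ) * c ≤ ctr i 1 ∧
          ctr i 1 ≤ ((A + ((t : ℕ) : ℤ) : ℤ) : ℝ) * c + 3 * c) := by
      intro i t ht
      rw [ht]
      have hmc : ((A + (m i - A) : ℤ) : ℝ) = (m i : ℝ) := by push_cast; ring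
      rw [hmc]
      exact ⟨hfl1 i, by linarith [hfl2 i, hc0]⟩
    have hbag2 : ∀ (i j : ι) (t : Fin N), ((t : ℕ) : ℤ) = m i - A →
        ctr i 1 ≤ ctr j 1 → ctr j 1 ≤ ctr i 1 + 2 * c →
        (((A + ((t : ℕ) : ℤ) : ℤ) : ℝ) * c ≤ ctr j 1 ∧
          ctr j 1 ≤ ((A + ((t : ℕ) : ℤ) : ℤ) : ℝ) * c + 3 * c) := by
      intro i j t ht h1 h2
      rw [ht]
      have hmc : ((A + (m i - A) : ℤ) : ℝ) = (m i : ℝ) := by push_cast; ring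
      rw [hmc]
      exact ⟨by linarith [hfl1 i], by linarith [hfl2 i]⟩
    refine ⟨⟨Fin N, inferInstance, SimpleGraph.pathGraph N, by rw [hN]; exact pathGraph_isTree _,
      fun t => {i : ι | ((A + ((t : ℕ) : ℤ) : ℤ) : ℝ) * c ≤ ctr i 1 ∧
        ctr i 1 ≤ ((A + ((t : ℕ) : ℤ) : ℤ) : ℝ) * c + 3 * c}, ?_, ?_, ?_⟩, ?_⟩
    · -- mem_bag
      intro v
      exact ⟨⟨(m v - A).toNat, hNt v⟩, hbag v _ (by
        simp only [Fin.val_mk]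
        have := (hAB v).1; omega)⟩
    · -- edge_bag
      intro u v huv
      obtain ⟨hune, z, hz1, hz2⟩ := huv
      have hdist : dist (ctr u) (ctr v) ≤ 2 * c := by
        have t1 : dist (ctr u) z ≤ c := by
          rw [dist_comm]; exact Metric.mem_closedBall.mp hz1
        have t2 : dist z (ctr v) ≤ c := Metric.mem_closedBall.mp hz2
        calc dist (ctr u) (ctr v) ≤ dist (ctr u) z + dist z (ctr v) := dist_triangle _ _ _
          _ ≤ 2 * c := by linarith
      have hyd : |ctr u 1 - ctr v 1| ≤ 2 * c := le_trans (hydiff u v) hdist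
      rw [abs_le] at hyd
      rcases le_total (ctr u 1) (ctr v 1) with h | h
      · have hval : (((⟨(m u - A).toNat, hNt u⟩ : Fin N) : ℕ) : ℤ) = m u - A := by
          simp only [Fin.val_mk]
          have := (hAB u).1; omega
        exact ⟨⟨(m u - A).toNat, hNt u⟩, hbag u _ hval,
          hbag2 u v _ hval h (by linarith [hyd.1])⟩
      · have hval : (((⟨(m v - A).toNat, hNt v⟩ : Fin N) : ℕ) : ℤ) = m v - A := by
          simp only [Fin.val_mk]
          have := (hAB v).1; omega
        exact ⟨⟨(m v - A).toNat, hNt v⟩,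
          hbag2 v u _ hval h (by linarith [hyd.2]), hbag v _ hval⟩
    · -- bag_connected
      intro v
      apply induce_pathGraph_connected
      · intro a b c' hab hbc haS hcS
        simp only [Set.mem_setOf_eq] at haS hcS ⊢
        have key_mono : ∀ s t : Fin N, s ≤ t →
            ((A + ((s:ℕ):ℤ) : ℤ) : ℝ) * c ≤ ((A + ((t:ℕ):ℤ) : ℤ) : ℝ) * c := by
          intro s t hst
          apply mul_le_mul_of_nonneg_right _ hc0.le
          have h1 : ((s:ℕ):ℤ) ≤ ((t:ℕ):ℤ) := by exact_mod_cast Fin.le_def.mp hst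
          have h2 : (A + ((s:ℕ):ℤ)) ≤ A + ((t:ℕ):ℤ) := by omega
          exact_mod_cast h2
        exact ⟨le_trans (key_mono b c' hbc) hcS.1,
          le_trans haS.2 (by linarith [key_mono a b hab])⟩
      · exact ⟨⟨(m v - A).toNat, hNt v⟩, hbag v _ (by
          simp only [Fin.val_mk]
          have := (hAB v).1; omega)⟩
    · -- independence bound
      intro t I hI
      obtain ⟨hsub, hind⟩ := hI
      have hg0 : (0:ℝ) < (33/25) * c := by positivity
      have hmaps : ∀ i ∈ I,
          ((decide (ctr i 1 ≤ ((A + ((t : ℕ) : ℤ) : ℤ) : ℝ) * c + 3 * c / 2),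
            ⌊(ctr i 0 - x₀ - c) / ((33/25) * c)⌋) : Bool × ℤ) ∈
            (Finset.univ : Finset Bool) ×ˢ Finset.Icc (0:ℤ) (⌈(l:ℝ)/c⌉ - 1) := by
        intro i hi
        simp only [Finset.mem_product, Finset.mem_univ, true_and, Finset.mem_Icc]
        refine ⟨Int.floor_nonneg.mpr (div_nonneg (by linarith [(hxb i).1]) hg0.le), ?_⟩
        rw [Int.floor_le_iff]
        have h2 : ctr i 0 - x₀ - c ≤ (l:ℝ) - 1 - 2*c := by linarith [(hxb i).2]
        have h3 : (ctr i 0 - x₀ - c) / ((33/25) * c) ≤ ((l:ℝ) - 1 - 2*c) / ((33/25) * c) := by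
          gcongr
        have h5 : (l:ℝ)/c * c = l := div_mul_cancel₀ _ (ne_of_gt hc0)
        have h4 : ((l:ℝ) - 1 - 2*c) / ((33/25) * c) ≤ (l:ℝ)/c - 1 := by
          rw [div_le_iff₀ hg0]
          nlinarith [hc0, hc, h5]
        have h6 := Int.le_ceil ((l:ℝ)/c)
        push_cast
        linarith
      have hinj : Set.InjOn (fun i : ι =>
          ((decide (ctr i 1 ≤ ((A + ((t : ℕ) : ℤ) : ℤ) : ℝ) * c + 3 * c / 2),
            ⌊(ctr i 0 - x₀ - c) / ((33/25) * c)⌋) : Bool × ℤ)) ↑I := by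
        intro i hi j hj heq
        by_contra hij
        have hnadj := hind i (Finset.mem_coe.mp hi) j (Finset.mem_coe.mp hj) hij
        have hd := hfar i j hij hnadj
        simp only [Prod.mk.injEq] at heq
        obtain ⟨hb, hf⟩ := heq
        have habs := Int.abs_sub_lt_one_of_floor_eq_floor hf
        have hxe : (ctr i 0 - x₀ - c) / ((33/25) * c) - (ctr j 0 - x₀ - c) / ((33/25) * c)
            = (ctr i 0 - ctr j 0) / ((33/25) * c) := by ring
        rw [hxe, abs_div, abs_of_pos hg0, div_lt_one hg0] at habs
        have hbi := hsub hi
        have hbj := hsub hj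
        simp only [Set.mem_setOf_eq] at hbi hbj
        have hiff := decide_eq_decide.mp hb
        have hyabs : |ctr i 1 - ctr j 1| ≤ 3 * c / 2 := by
          rw [abs_le]
          by_cases hP : ctr i 1 ≤ ((A + ((t : ℕ) : ℤ) : ℤ) : ℝ) * c + 3 * c / 2
          · have hQ := hiff.mp hP
            exact ⟨by linarith [hbi.1, hbj.1], by linarith [hbi.1, hbj.1]⟩
          · push_neg at hP
            have hQ : ¬ ctr j 1 ≤ ((A + ((t : ℕ) : ℤ) : ℤ) : ℝ) * c + 3 * c / 2 :=
              fun h => absurd (hiff.mpr h) (by push_neg; exact hP)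
            push_neg at hQ
            exact ⟨by linarith [hbi.2, hbj.2], by linarith [hbi.2, hbj.2]⟩
        obtain ⟨hx1, hx2⟩ := abs_lt.mp habs
        obtain ⟨hy1, hy2⟩ := abs_le.mp hyabs
        have hc2 := hcoord i j
        have p1 : (dist (ctr i) (ctr j) - 2*c) * (dist (ctr i) (ctr j) + 2*c) > 0 :=
          mul_pos (by linarith) (by linarith)
        have p2 : ((33/25)*c - (ctr i 0 - ctr j 0)) * ((33/25)*c + (ctr i 0 - ctr j 0)) > 0 :=
          mul_pos (by linarith) (by linarith)
        have p3 : (3*c/2 - (ctr i 1 - ctr j 1)) * (3*c/2 + (ctr i 1 - ctr j 1)) ≥ 0 :=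
          mul_nonneg (by linarith) (by linarith)
        nlinarith [p1, p2, p3, hc2, mul_pos hc0 hc0]
      have hcard := Finset.card_le_card_of_injOn _ hmaps hinj
      calc I.card ≤ ((Finset.univ : Finset Bool) ×ˢ
            Finset.Icc (0:ℤ) (⌈(l:ℝ)/c⌉ - 1)).card := hcard
        _ = 2 * (⌈(l:ℝ)/c⌉ - 1 + 1 - 0).toNat := by
            rw [Finset.card_product, Int.card_Icc]
            simp
        _ ≤ (2 * ⌈(l : ℝ) / c⌉).toNat := by omega
  · -- empty case
    haveI : IsEmpty ι := not_nonempty_iff.mp hne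
    refine ⟨⟨Fin 1, inferInstance, SimpleGraph.pathGraph 1, pathGraph_isTree 0,
      fun _ => (∅ : Set ι), fun v => (IsEmpty.false v).elim,
      fun u v h => (IsEmpty.false u).elim,
      fun v => (IsEmpty.false v).elim⟩, ?_⟩
    intro t I hI
    simp [Finset.eq_empty_of_isEmpty I]
end

section
/- Let ℓ ≥ 1 be an integer and let 𝒫 be a finite family of paths on the integer grid (finite nonempty subsets P ⊆ ℤ² whose induced subgraph in the grid graph on ℤ² is a path) such that for every P ∈ 𝒫 the horizontal part of P has length at most ℓ − 1, i.e., the difference between the largest and smallest x-coordinates of points of P is at most ℓ − 1. Let G be the vertex intersection graph of 𝒫 (two distinct paths adjacent if and only if they share a grid point). Then the layered tree-independence number of G is at most 4ℓ − 1. -/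
open Classical

open SimpleGraph
lemma aux_walk_mem_closed {V : Type*} {G : SimpleGraph V} {S : Set V}
    (hS : ∀ ⦃a b : V⦄, G.Adj a b → a ∈ S → b ∈ S) :
    ∀ {u v : V}, G.Walk u v → u ∈ S → v ∈ S := by
  intro u v w
  induction w with
  | nil => exact id
  | cons h p ih => intro hu; exact ih (hS h hu)

lemma aux_pathGraph_isAcyclic (n : ℕ) : (pathGraph n).IsAcyclic := by
  rw [isAcyclic_iff_forall_adj_isBridge]
  intro u v huv
  rw [isBridge_iff]
  refine ?_
  intro hreach
  rcases pathGraph_adj.mp huv with h | h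
  · have key : ∀ ⦃a b : Fin n⦄, (pathGraph n \ fromEdgeSet {s(u, v)}).Adj a b →
        a ∈ {x : Fin n | x.val ≤ u.val} → b ∈ {x : Fin n | x.val ≤ u.val} := by
      intro a b hab ha
      rw [sdiff_adj, fromEdgeSet_adj] at hab
      obtain ⟨hadj, hne⟩ := hab
      rcases pathGraph_adj.mp hadj with h2 | h2
      · by_cases hau : a = u
        · subst hau
          exfalso
          apply hne
          constructor
          · have : b = v := by apply Fin.ext; omega
            subst this; simp
          · exact hadj.ne
        · have : a.val < u.val := lt_of_le_of_ne ha (fun hh => hau (Fin.ext hh))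
          simp only [Set.mem_setOf_eq] at *
          omega
      · simp only [Set.mem_setOf_eq] at *; omega
    obtain ⟨w⟩ := hreach
    have := aux_walk_mem_closed key w (by simp)
    simp only [Set.mem_setOf_eq] at this
    omega
  · have key : ∀ ⦃a b : Fin n⦄, (pathGraph n \ fromEdgeSet {s(u, v)}).Adj a b →
        a ∈ {x : Fin n | x.val ≤ v.val} → b ∈ {x : Fin n | x.val ≤ v.val} := by
      intro a b hab ha
      rw [sdiff_adj, fromEdgeSet_adj] at hab
      obtain ⟨hadj, hne⟩ := hab
      rcases pathGraph_adj.mp hadj with h2 | h2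
      · by_cases hav : a = v
        · subst hav
          exfalso
          apply hne
          constructor
          · have : b = u := by apply Fin.ext; omega
            subst this
            rw [Sym2.eq_swap]; simp
          · exact hadj.ne
        · have : a.val < v.val := lt_of_le_of_ne ha (fun hh => hav (Fin.ext hh))
          simp only [Set.mem_setOf_eq] at *
          omega
      · simp only [Set.mem_setOf_eq] at *; omega
    obtain ⟨w⟩ := hreach.symm
    have := aux_walk_mem_closed key w (by simp)
    simp only [Set.mem_setOf_eq] at this
    omega

lemma aux_pathGraph_isTree (n : ℕ) : (pathGraph (n + 1)).IsTree :=
  ⟨pathGraph_connected n, aux_pathGraph_isAcyclic _⟩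

lemma aux_induce_pathGraph_connected {n : ℕ} {S : Set (Fin (n + 1))} (hne : S.Nonempty)
    (hint : ∀ a c : Fin (n + 1), a ∈ S → c ∈ S → ∀ b : Fin (n + 1), a ≤ b → b ≤ c → b ∈ S) :
    ((pathGraph (n + 1)).induce S).Connected := by
  obtain ⟨s0, hs0⟩ := hne
  haveI : Nonempty ↥S := ⟨⟨s0, hs0⟩⟩
  have main : ∀ (k : ℕ) (u v : ↥S), (v : Fin (n + 1)).val = (u : Fin (n + 1)).val + k →
      ((pathGraph (n + 1)).induce S).Reachable u v := by
    intro k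
    induction k with
    | zero =>
      intro u v hv
      have : u = v := by
        apply Subtype.ext; apply Fin.ext; omega
      rw [this]
    | succ k ih =>
      intro u v hv
      have hub : (u : Fin (n + 1)).val + 1 ≤ n := by
        have := (v : Fin (n + 1)).isLt
        omega
      set mid : Fin (n + 1) := ⟨(u : Fin (n + 1)).val + 1, by omega⟩ with hmid
      have hmidS : mid ∈ S := by
        apply hint (u : Fin (n+1)) (v : Fin (n+1)) u.2 v.2
        · rw [Fin.le_def]; simp [hmid]
        · rw [Fin.le_def]; show (u : Fin (n+1)).val + 1 ≤ _; omega
      have hadj : ((pathGraph (n + 1)).induce S).Adj u ⟨mid, hmidS⟩ := by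
        simp only [comap_adj, Function.Embedding.coe_subtype]
        rw [pathGraph_adj]
        left; simp [hmid]
      exact hadj.reachable.trans (ih ⟨mid, hmidS⟩ v (by simp [hmid]; omega))
  constructor
  intro u v
  rcases le_total ((u : Fin (n+1)).val) ((v : Fin (n+1)).val) with h | h
  · exact main ((v : Fin (n+1)).val - (u : Fin (n+1)).val) u v (by omega)
  · exact (main ((u : Fin (n+1)).val - (v : Fin (n+1)).val) v u (by omega)).symm

lemma aux_walk_ivt {P : Set (ℤ × ℤ)} :
    ∀ {u v : ↥P} (_ : (latticeGraph.induce P).Walk u v) (t : ℤ),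
      (u : ℤ × ℤ).2 ≤ t → t ≤ (v : ℤ × ℤ).2 → ∃ r ∈ P, r.2 = t := by
  intro u v w
  induction w with
  | nil => rename_i x; intro t h1 h2; exact ⟨x, x.2, le_antisymm h1 h2⟩
  | @cons a b c h p ih =>
    intro t h1 h2
    by_cases hc : (b : ℤ × ℤ).2 ≤ t
    · exact ih t hc h2
    · push_neg at hc
      have hadj : ((a : ℤ × ℤ).1 - (b : ℤ × ℤ).1).natAbs
          + ((a : ℤ × ℤ).2 - (b : ℤ × ℤ).2).natAbs = 1 := by
        exact h
      refine ⟨a, a.2, ?_⟩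
      omega

lemma aux_grid_ivt {P : Set (ℤ × ℤ)} (hconn : (latticeGraph.induce P).Connected)
    {p q : ℤ × ℤ} (hp : p ∈ P) (hq : q ∈ P) {t : ℤ} (h1 : p.2 ≤ t) (h2 : t ≤ q.2) :
    ∃ r ∈ P, r.2 = t := by
  obtain ⟨w⟩ := hconn.preconnected ⟨p, hp⟩ ⟨q, hq⟩
  exact aux_walk_ivt w t h1 h2

/-- the vertex intersection graph of a finite family of grid paths, each with
horizontal part of length at most `ℓ - 1`, has layered tree-independence number at most
`4ℓ - 1`. -/
theorem stmt19 {ι : Type} [Fintype ι] (l : ℕ) (hl : 1 ≤ l)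
    (P : ι → Set (ℤ × ℤ)) (hpath : ∀ i, IsGridPath (P i))
    (hhor : ∀ i, ∀ p ∈ P i, ∀ q ∈ P i, p.1 - q.1 ≤ (l : ℤ) - 1) :
    layeredTreeAlpha (intersectionGraph P) ≤ 4 * l - 1 := by
  apply Nat.sInf_le
  show layeredTreeAlphaLE (intersectionGraph P) (4 * l - 1)
  by_cases hne : Nonempty ι
  swap
  · -- empty case
    refine ⟨⟨Unit, inferInstance, ⊥, ⟨?_, isAcyclic_bot⟩, fun _ => ∅, ?_, ?_, ?_⟩,
      fun _ => 0, ?_, ?_⟩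
    · constructor
      intro u v
      cases u; cases v
      exact Reachable.refl _
    · intro v; exact (hne ⟨v⟩).elim
    · intro u v _; exact (hne ⟨u⟩).elim
    · intro v; exact (hne ⟨v⟩).elim
    · intro u v _; exact (hne ⟨u⟩).elim
    · intro t i I hI
      have : I = ∅ := Finset.eq_empty_of_forall_notMem (fun x _ => (hne ⟨x⟩).elim)
      simp [this]
  -- main case
  have hfin : ∀ i, (P i).Finite := fun i => (hpath i).1
  have hnep : ∀ i, (P i).Nonempty := fun i => (hpath i).2.1
  have hconn : ∀ i, (latticeGraph.induce (P i)).Connected :=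
    fun i => (hpath i).2.2.1.isConnected
  set F : ι → Finset (ℤ × ℤ) := fun i => (hfin i).toFinset with hF
  have hFmem : ∀ i p, p ∈ F i ↔ p ∈ P i := fun i p => Set.Finite.mem_toFinset _
  have hFne : ∀ i, (F i).Nonempty := by
    intro i; obtain ⟨p, hp⟩ := hnep i; exact ⟨p, (hFmem i p).mpr hp⟩
  set Y : Finset ℤ := Finset.univ.biUnion (fun i => (F i).image Prod.snd) with hY
  have hYmem : ∀ i, ∀ p ∈ P i, p.2 ∈ Y := fun i p hp =>
    Finset.mem_biUnion.mpr ⟨i, Finset.mem_univ i,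
      Finset.mem_image_of_mem _ ((hFmem i p).mpr hp)⟩
  have hYne : Y.Nonempty := by
    obtain ⟨i⟩ := hne
    obtain ⟨p, hp⟩ := hnep i
    exact ⟨p.2, hYmem i p hp⟩
  set a : ℤ := Y.min' hYne with ha
  set b : ℤ := Y.max' hYne with hb
  set N : ℕ := (b - a).toNat with hN
  have hbounds : ∀ i, ∀ p ∈ P i, a ≤ p.2 ∧ p.2 ≤ b := fun i p hp =>
    ⟨Y.min'_le _ (hYmem i p hp), Y.le_max' _ (hYmem i p hp)⟩
  set X : ι → Finset ℤ := fun i => (F i).image Prod.fst with hX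
  have hXne : ∀ i, (X i).Nonempty := fun i => (hFne i).image _
  set mnx : ι → ℤ := fun i => (X i).min' (hXne i) with hmnx
  have hmnx_le : ∀ i, ∀ p ∈ P i, mnx i ≤ p.1 := fun i p hp =>
    Finset.min'_le _ _ (Finset.mem_image_of_mem _ ((hFmem i p).mpr hp))
  have hmnx_mem : ∀ i, ∃ q ∈ P i, q.1 = mnx i := by
    intro i
    obtain ⟨q, hq, hq2⟩ := Finset.mem_image.mp
      (show mnx i ∈ Finset.image Prod.fst (F i) from Finset.min'_mem _ _)
    exact ⟨q, (hFmem i q).mp hq, hq2⟩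
  have hspan : ∀ i, ∀ p ∈ P i, p.1 ≤ mnx i + ((l : ℤ) - 1) := by
    intro i p hp
    obtain ⟨q, hq, hq2⟩ := hmnx_mem i
    have := hhor i p hp q hq
    omega
  set c : ι → ℤ := fun i => mnx i / (l : ℤ) with hc
  have hMne : (Finset.univ.image c).Nonempty := by
    obtain ⟨i⟩ := hne
    exact ⟨c i, Finset.mem_image_of_mem _ (Finset.mem_univ i)⟩
  set M : ℤ := (Finset.univ.image c).min' hMne with hM
  have hMle : ∀ i, M ≤ c i := fun i =>
    Finset.min'_le _ _ (Finset.mem_image_of_mem _ (Finset.mem_univ i))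
  set L : ι → ℕ := fun i => (c i - M).toNat with hL
  have hlpos : (0 : ℤ) < (l : ℤ) := by exact_mod_cast hl
  have hcstep : ∀ i j, (intersectionGraph P).Adj i j → c i ≤ c j + 1 := by
    intro i j hadj
    obtain ⟨x, hxi, hxj⟩ := hadj.2
    have h1 : mnx i ≤ x.1 := hmnx_le i x hxi
    have h2 : x.1 ≤ mnx j + ((l : ℤ) - 1) := hspan j x hxj
    have h3 : mnx i ≤ mnx j + 1 * (l : ℤ) := by omega
    have h4 : c i ≤ (mnx j + 1 * (l : ℤ)) / (l : ℤ) := by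
      rw [hc]
      exact Int.ediv_le_ediv hlpos h3
    rwa [Int.add_mul_ediv_right _ _ (by omega : (l : ℤ) ≠ 0)] at h4
  have hdivfacts : ∀ i, (l : ℤ) * c i ≤ mnx i ∧ mnx i < (l : ℤ) * c i + l := by
    intro i
    have hd : (l : ℤ) * c i + mnx i % (l : ℤ) = mnx i := by
      simp only [hc]; exact Int.mul_ediv_add_emod _ _
    have h1 : 0 ≤ mnx i % (l : ℤ) := Int.emod_nonneg _ (by omega)
    have h2 : mnx i % (l : ℤ) < (l : ℤ) := Int.emod_lt_of_pos _ hlpos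
    constructor <;> omega
  -- the tree decomposition
  refine ⟨⟨Fin (N + 1), inferInstance, pathGraph (N + 1), aux_pathGraph_isTree N,
    fun t => {i | ∃ x : ℤ, (x, a + (t.val : ℤ)) ∈ P i}, ?_, ?_, ?_⟩, L, ?_, ?_⟩
  · -- mem_bag
    intro i
    obtain ⟨p, hp⟩ := hnep i
    have hbp := hbounds i p hp
    refine ⟨⟨(p.2 - a).toNat, by omega⟩, ⟨p.1, ?_⟩⟩
    have : a + (((p.2 - a).toNat : ℕ) : ℤ) = p.2 := by omega
    simp only [this]
    simpa using hp
  · -- edge_bag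
    intro u v huv
    obtain ⟨x, hxu, hxv⟩ := huv.2
    have hbx := hbounds u x hxu
    refine ⟨⟨(x.2 - a).toNat, by omega⟩, ⟨x.1, ?_⟩, ⟨x.1, ?_⟩⟩ <;>
    · have : a + (((x.2 - a).toNat : ℕ) : ℤ) = x.2 := by omega
      simp only [this]
      first
        | simpa using hxu
        | simpa using hxv
  · -- bag_connected
    intro i
    apply aux_induce_pathGraph_connected
    · obtain ⟨p, hp⟩ := hnep i
      have hbp := hbounds i p hp
      refine ⟨⟨(p.2 - a).toNat, by omega⟩, ⟨p.1, ?_⟩⟩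
      have : a + (((p.2 - a).toNat : ℕ) : ℤ) = p.2 := by omega
      simp only [this]
      simpa using hp
    · intro t1 t3 h1 h3 t2 h12 h23
      obtain ⟨x1, hx1⟩ := h1
      obtain ⟨x3, hx3⟩ := h3
      rw [Fin.le_def] at h12 h23
      have h1' : ((x1, a + (t1.val : ℤ)) : ℤ × ℤ).2 ≤ a + (t2.val : ℤ) := by simp; omega
      have h2' : (a + (t2.val : ℤ)) ≤ ((x3, a + (t3.val : ℤ)) : ℤ × ℤ).2 := by simp; omega
      obtain ⟨r, hrP, hr2⟩ := aux_grid_ivt (hconn i) hx1 hx3 h1' h2'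
      refine ⟨r.1, ?_⟩
      rw [← hr2]
      simpa using hrP
  · -- layering
    intro u v hadj
    have h1 := hcstep u v hadj
    have h2 := hMle u
    have h3 := hMle v
    simp only [hL]
    omega
  · -- independence
    intro t i0 I hI
    obtain ⟨hsub, hindep⟩ := hI
    set row : ℤ := a + (t.val : ℤ) with hrow
    set f : ι → ℤ := fun j =>
      if h : ∃ x : ℤ, (x, row) ∈ P j then h.choose else 0 with hf
    have hfP : ∀ j ∈ I, (f j, row) ∈ P j := by
      intro j hj
      have hb2 := hsub hj
      obtain ⟨hbag, -⟩ := hb2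
      have hbag' : ∃ x : ℤ, (x, row) ∈ P j := hbag
      simp only [hf]
      rw [dif_pos hbag']
      exact hbag'.choose_spec
    have hLj : ∀ j ∈ I, L j = i0 := by
      intro j hj
      exact (hsub hj).2
    have hrange : ∀ j ∈ I,
        f j ∈ Finset.Icc ((M + (i0 : ℤ)) * l) ((M + (i0 : ℤ)) * l + 2 * l - 2) := by
      intro j hj
      have hcj : c j = M + (i0 : ℤ)  := by
        have h1 := hLj j hj
        have h2 := hMle j
        simp only [hL] at h1
        omega
      have hd := hdivfacts j
      have h5 : mnx j ≤ f j := hmnx_le j _ (hfP j hj)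
      have h6 : f j ≤ mnx j + ((l : ℤ) - 1) := hspan j _ (hfP j hj)
      have h7 : (M + (i0 : ℤ)) * l = (l : ℤ) * c j := by rw [hcj]; ring
      rw [Finset.mem_Icc, h7]
      omega
    have hinj : Set.InjOn f ↑I := by
      intro x hx y hy hxy
      by_contra hne2
      apply hindep x (Finset.mem_coe.mp hx) y (Finset.mem_coe.mp hy) hne2
      refine ⟨hne2, ⟨(f x, row), hfP x (Finset.mem_coe.mp hx), ?_⟩⟩
      rw [hxy]
      exact hfP y (Finset.mem_coe.mp hy)
    calc I.card ≤ (Finset.Icc ((M + (i0 : ℤ)) * l) ((M + (i0 : ℤ)) * l + 2 * l - 2)).card :=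
          Finset.card_le_card_of_injOn f hrange hinj
      _ ≤ 4 * l - 1 := by
          rw [Int.card_Icc]
          omega
end
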